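/- arXiv:1705.02957 — 3 statements merged into one kernel-verified Lean document; each statement's English description precedes it below -/
import Mathlib

section
/- Let X be a random variable with an exponentially-dominated tail distribution with parameters (α, β, λ, γ), and let M_K be a sequence of reals with M_K ≥ 1 such that M_K/K^μ → 0 for some μ < 1. Then liminf_{K→∞} q̄_X(M_K/K) / q̄_X(1/K²) > 0, where q̄_X is the tail quantile function of X. -/
open MeasureTheory ProbabilityTheory Filter

/-- The cumulative distribution function of a real random variable `X` under `μ`. -/
noncomputable def cdfOf {Ω : Type*} [MeasurableSpace Ω] (μ : Measure Ω) (X : Ω → ℝ) : ℝ → ℝ :=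
  fun x => (μ {ω | X ω ≤ x}).toReal

/-- `orderStat v j` is the `j`-th smallest value (1-indexed) among `v 0, …, v (K-1)`. -/
noncomputable def orderStat {K : ℕ} (v : Fin K → ℝ) (j : ℕ) : ℝ :=
  ((Finset.univ.val.map v).sort (· ≤ ·)).getD (j - 1) 0

/-- A finite family of random variables is `m`-dependent: every subfamily whose indices are
pairwise more than `m` apart is jointly independent. -/
def MDepFam {Ω β : Type*} [MeasurableSpace Ω] [MeasurableSpace β] (μ : Measure Ω) (m : ℕ)
    {K : ℕ} (X : Fin K → Ω → β) : Prop :=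
  ∀ S : Finset (Fin K),
    (∀ i ∈ S, ∀ j ∈ S, i ≠ j → (m : ℤ) < |(i : ℤ) - (j : ℤ)|) →
    iIndepFun (fun i : S => X i.1) μ

/-- `F` has an exponentially-dominated tail with parameters `(α, β, lam, γ)`:
`(1 - F x)/(α x^β e^{-lam x^γ}) → 1` as `x → ∞`. -/
def ExpDomTail (F : ℝ → ℝ) (α β lam γ : ℝ) : Prop :=
  Tendsto (fun x : ℝ => (1 - F x) / (α * x ^ β * Real.exp (-lam * x ^ γ))) atTop (nhds 1)

/-- Tail quantile function `q̄_F(p) = min {x | F x ≥ 1 - p}` (as an infimum). -/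
noncomputable def tailQuantile (F : ℝ → ℝ) (p : ℝ) : ℝ := sInf {x | 1 - p ≤ F x}

lemma tq_le {F : ℝ → ℝ} (hF : Monotone F) {p x z : ℝ}
    (hz : F z < 1 - p) (hx : 1 - p ≤ F x) : tailQuantile F p ≤ x := by
  refine csInf_le ⟨z, fun y hy => ?_⟩ hx
  by_contra h
  exact absurd (le_trans hy (hF (le_of_not_ge h))) (not_le.2 hz)

lemma le_tq {F : ℝ → ℝ} (hF : Monotone F) {p x w : ℝ}
    (hw : 1 - p ≤ F w) (hx : F x < 1 - p) : x ≤ tailQuantile F p := by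
  refine le_csInf ⟨w, hw⟩ fun y hy => ?_
  by_contra h
  exact absurd (hy.trans (hF (le_of_not_ge h))) (not_le.2 hx)

lemma tq_mono {F : ℝ → ℝ} (hF : Monotone F) {p q z w : ℝ} (hpq : q ≤ p)
    (hz : F z < 1 - p) (hw : 1 - q ≤ F w) : tailQuantile F p ≤ tailQuantile F q := by
  refine csInf_le_csInf ⟨z, fun y hy => ?_⟩ ⟨w, hw⟩ (fun y hy => by
    simp only [Set.mem_setOf_eq] at hy ⊢; linarith)
  by_contra h
  exact absurd (le_trans hy (hF (le_of_not_ge h))) (not_le.2 hz)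

lemma rpow_mul_exp_tendsto (c : ℝ) {s : ℝ} (hs : 0 < s) :
    Tendsto (fun L : ℝ => L ^ c * Real.exp (s * L)) atTop atTop := by
  refine (tendsto_exp_mul_div_rpow_atTop (-c) s hs).congr' ?_
  filter_upwards [eventually_gt_atTop (0 : ℝ)] with L hL
  rw [Real.rpow_neg hL.le]; field_simp

set_option maxHeartbeats 1000000 in
/-- for a random variable with an exponentially-dominated tail (continuous CDF)
and `M_K ≥ 1` with `M_K / K^μ → 0` for some `μ < 1`, one has
`liminf_K q̄_X(M_K/K) / q̄_X(1/K²) > 0`. -/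
theorem stmt_16 {Ω : Type*} [MeasurableSpace Ω] (μ : Measure Ω) [IsProbabilityMeasure μ]
    (X : Ω → ℝ) (hXmeas : Measurable X)
    (F : ℝ → ℝ) (hFdef : F = cdfOf μ X) (hFcont : Continuous F)
    (α β lam γ : ℝ) (hα : 0 < α) (hlam : 0 < lam) (hγ : 0 < γ)
    (htail : ExpDomTail F α β lam γ)
    (M : ℕ → ℝ) (hM1 : ∀ K, 1 ≤ M K)
    (t : ℝ) (ht : t < 1)
    (hM : Tendsto (fun K : ℕ => M K / (K : ℝ) ^ t) atTop (nhds 0)) :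
    0 < Filter.liminf
      (fun K : ℕ => tailQuantile F (M K / K) / tailQuantile F (1 / (K : ℝ) ^ 2)) atTop := by
  -- basic CDF facts
  have hprob : IsProbabilityMeasure (μ.map X) := Measure.isProbabilityMeasure_map hXmeas.aemeasurable
  have hFmap : ∀ x, F x = ProbabilityTheory.cdf (μ.map X) x := by
    intro x
    rw [hFdef, cdfOf, ProbabilityTheory.cdf_eq_real, measureReal_def]
    congr 1
    rw [Measure.map_apply hXmeas measurableSet_Iic]
    rfl
  have hFmono : Monotone F := by
    intro a b hab
    simp only [hFdef, cdfOf]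
    exact ENNReal.toReal_mono (measure_ne_top μ _)
      (measure_mono fun ω hω => le_trans hω hab)
  have hF0 : Tendsto F atBot (nhds 0) :=
    (tendsto_cdf_atBot (μ.map X)).congr fun x => (hFmap x).symm
  have hF1 : Tendsto F atTop (nhds 1) :=
    (tendsto_cdf_atTop (μ.map X)).congr fun x => (hFmap x).symm
  have hne : ∀ p : ℝ, 0 < p → ∃ w, 1 - p ≤ F w := fun p hp =>
    ((hF1.eventually (eventually_gt_nhds (by linarith : 1 - p < 1))).exists).imp
      fun w hw => hw.le
  have hbd : ∀ p : ℝ, p < 1 → ∃ z, F z < 1 - p := fun p hp =>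
    (hF0.eventually (eventually_lt_nhds (by linarith : (0:ℝ) < 1 - p))).exists
  -- constants
  set t' : ℝ := max t (1/2) with ht'def
  have ht'1 : t' < 1 := max_lt ht (by norm_num)
  have ht'h : (1:ℝ)/2 ≤ t' := le_max_right _ _
  set s : ℝ := (1 - t') / 2 with hsdef
  have hs0 : 0 < s := by simp only [hsdef]; linarith
  have hs3 : s ≤ 3 := by simp only [hsdef]; linarith
  -- tail bounds from htail
  have h1 := htail.eventually (eventually_ge_nhds (by norm_num : (1:ℝ)/2 < 1))
  have h2 := htail.eventually (eventually_le_nhds (by norm_num : (1:ℝ) < 2))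
  obtain ⟨a, ha⟩ := eventually_atTop.1 (h1.and h2)
  set x₀ : ℝ := max a 1 with hx₀def
  have hx₀1 : (1:ℝ) ≤ x₀ := le_max_right _ _
  have hGbound : ∀ x, x₀ ≤ x →
      (1/2) * (α * x ^ β * Real.exp (-lam * x ^ γ)) ≤ 1 - F x ∧
      1 - F x ≤ 2 * (α * x ^ β * Real.exp (-lam * x ^ γ)) := by
    intro x hx
    have hxpos : (0:ℝ) < x := lt_of_lt_of_le one_pos (hx₀1.trans hx)
    have hhpos : 0 < α * x ^ β * Real.exp (-lam * x ^ γ) := by positivity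
    obtain ⟨hb1, hb2⟩ := ha x (le_trans (le_max_left _ _) hx)
    constructor
    · calc (1/2) * (α * x ^ β * Real.exp (-lam * x ^ γ))
          ≤ ((1 - F x) / (α * x ^ β * Real.exp (-lam * x ^ γ))) *
            (α * x ^ β * Real.exp (-lam * x ^ γ)) := by
            apply mul_le_mul_of_nonneg_right hb1 hhpos.le
        _ = 1 - F x := div_mul_cancel₀ _ hhpos.ne'
    · calc 1 - F x
          = ((1 - F x) / (α * x ^ β * Real.exp (-lam * x ^ γ))) *
            (α * x ^ β * Real.exp (-lam * x ^ γ)) := (div_mul_cancel₀ _ hhpos.ne').symm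
        _ ≤ 2 * (α * x ^ β * Real.exp (-lam * x ^ γ)) :=
            mul_le_mul_of_nonneg_right hb2 hhpos.le
  have hGx₀pos : 0 < 1 - F x₀ :=
    lt_of_lt_of_le (by positivity) (hGbound x₀ le_rfl).1
  -- log of K tends to infinity
  have hLtop : Tendsto (fun K : ℕ => Real.log K) atTop atTop :=
    Real.tendsto_log_atTop.comp tendsto_natCast_atTop_atTop
  -- eventual facts
  have fact4 : ∀ᶠ L : ℝ in atTop,
      1 < α / 2 * (s / lam) ^ (β / γ) * (L ^ (β / γ) * Real.exp (s * L)) := by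
    have hpos : 0 < α / 2 * (s / lam) ^ (β / γ) := by positivity
    exact (Tendsto.const_mul_atTop hpos
      (rpow_mul_exp_tendsto (β / γ) hs0)).eventually_gt_atTop 1
  have fact5 : ∀ᶠ L : ℝ in atTop,
      2 * α * (3 / lam) ^ (β / γ) * L ^ (β / γ) ≤ Real.exp L := by
    filter_upwards [(tendsto_exp_div_rpow_atTop (β / γ)).eventually_ge_atTop
      (2 * α * (3 / lam) ^ (β / γ)), eventually_gt_atTop (0 : ℝ)] with L hh hL
    rw [le_div_iff₀ (by positivity)] at hh
    exact hh
  have fact6 : ∀ᶠ K : ℕ in atTop, 1 / (K : ℝ) ^ 2 < 1 - F x₀ := by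
    have htt : Tendsto (fun K : ℕ => 1 / ((K : ℝ) ^ 2)) atTop (nhds 0) := by
      simp only [one_div]
      exact ((tendsto_pow_atTop (two_ne_zero)).comp
        tendsto_natCast_atTop_atTop).inv_tendsto_atTop
    exact htt.eventually (eventually_lt_nhds hGx₀pos)
  have fact2 : ∀ᶠ K : ℕ in atTop, M K ≤ (K : ℝ) ^ t' := by
    filter_upwards [hM.eventually (eventually_lt_nhds one_pos),
      eventually_ge_atTop 1] with K hK hK1
    have hK1' : (1:ℝ) ≤ (K:ℝ) := by exact_mod_cast hK1
    have hKt : (0:ℝ) < (K:ℝ) ^ t := Real.rpow_pos_of_pos (by linarith) t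
    have hlt : M K < (K:ℝ) ^ t := by
      rw [div_lt_one hKt] at hK
      exact hK
    exact hlt.le.trans (Real.rpow_le_rpow_of_exponent_le hK1' (le_max_left _ _))
  -- the key eventual bound
  have key : ∀ᶠ K : ℕ in atTop,
      (s / 3) ^ (1/γ) ≤ tailQuantile F (M K / K) / tailQuantile F (1 / (K : ℝ) ^ 2) ∧
      tailQuantile F (M K / K) / tailQuantile F (1 / (K : ℝ) ^ 2) ≤ 1 := by
    filter_upwards [fact2, fact6, eventually_ge_atTop 2,
      hLtop.eventually_ge_atTop (max 1 (lam * x₀ ^ γ / s)),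
      hLtop.eventually (fact4.and fact5)] with K hMK hp2x₀ hK2 hLbig hLK
    obtain ⟨f4, f5⟩ := hLK
    set L : ℝ := Real.log K with hLdef
    have hL1 : (1:ℝ) ≤ L := le_trans (le_max_left _ _) hLbig
    have hL0 : (0:ℝ) < L := lt_of_lt_of_le one_pos hL1
    have hK2' : (2:ℝ) ≤ (K:ℝ) := by exact_mod_cast hK2
    have hK1' : (1:ℝ) ≤ (K:ℝ) := by linarith
    have hK0 : (0:ℝ) < (K:ℝ) := lt_of_lt_of_le one_pos hK1'
    have hKexp : (K:ℝ) = Real.exp L := (Real.exp_log hK0).symm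
    -- the two reference points
    set xK : ℝ := (s * L / lam) ^ (1/γ) with hxKdef
    set yK : ℝ := (3 * L / lam) ^ (1/γ) with hyKdef
    have hsL : (0:ℝ) < s * L / lam := by positivity
    have h3L : (0:ℝ) < 3 * L / lam := by positivity
    have hxKγ : xK ^ γ = s * L / lam := by
      rw [hxKdef, one_div, Real.rpow_inv_rpow hsL.le hγ.ne']
    have hyKγ : yK ^ γ = 3 * L / lam := by
      rw [hyKdef, one_div, Real.rpow_inv_rpow h3L.le hγ.ne']
    have hxKx₀ : x₀ ≤ xK := by
      have hx₀γ : x₀ ^ γ ≤ s * L / lam := by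
        have h := le_trans (le_max_right _ _) hLbig
        rw [div_le_iff₀ hs0] at h
        rw [le_div_iff₀ hlam]
        nlinarith
      calc x₀ = (x₀ ^ γ) ^ (1/γ) := by
            rw [one_div, Real.rpow_rpow_inv (by linarith) hγ.ne']
        _ ≤ xK := Real.rpow_le_rpow (by positivity) hx₀γ (by positivity)
    have hyKx₀ : x₀ ≤ yK := by
      have hsle : s * L / lam ≤ 3 * L / lam := by gcongr <;> nlinarith
      exact le_trans hxKx₀ (Real.rpow_le_rpow hsL.le hsle (by positivity))
    have hxK0 : (0:ℝ) < xK := lt_of_lt_of_le (lt_of_lt_of_le one_pos hx₀1) hxKx₀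
    have hyK0 : (0:ℝ) < yK := lt_of_lt_of_le (lt_of_lt_of_le one_pos hx₀1) hyKx₀
    -- p1 and p2
    set p1 : ℝ := M K / K with hp1def
    set p2 : ℝ := 1 / (K : ℝ) ^ 2 with hp2def
    have hp1pos : 0 < p1 := div_pos (lt_of_lt_of_le one_pos (hM1 K)) hK0
    have hp1lt1 : p1 < 1 := by
      rw [hp1def, div_lt_one hK0]
      calc M K ≤ (K:ℝ) ^ t' := hMK
        _ < (K:ℝ) ^ (1:ℝ) := Real.rpow_lt_rpow_of_exponent_lt (by linarith) ht'1
        _ = (K:ℝ) := Real.rpow_one _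
    have hp2pos : 0 < p2 := by positivity
    have hp2lt1 : p2 < 1 := by
      rw [hp2def, div_lt_one (by positivity)]
      nlinarith
    have hp21 : p2 ≤ p1 := by
      rw [hp1def, hp2def, div_le_div_iff₀ (by positivity) hK0]
      nlinarith [hM1 K]
    -- rewrite the tail bounds at xK and yK
    have hexpxK : Real.exp (-lam * xK ^ γ) = Real.exp (-(s * L)) := by
      rw [hxKγ]; congr 1; field_simp
    have hexpyK : Real.exp (-lam * yK ^ γ) = Real.exp (-(3 * L)) := by
      rw [hyKγ]; congr 1; field_simp
    have hxKβ : xK ^ β = (s / lam) ^ (β / γ) * L ^ (β / γ) := by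
      rw [hxKdef, ← Real.rpow_mul hsL.le, one_div, inv_mul_eq_div]
      have e : s * L / lam = (s / lam) * L := by ring
      rw [e, Real.mul_rpow (by positivity) hL0.le]
    have hyKβ : yK ^ β = (3 / lam) ^ (β / γ) * L ^ (β / γ) := by
      rw [hyKdef, ← Real.rpow_mul h3L.le, one_div, inv_mul_eq_div]
      have e : 3 * L / lam = (3 / lam) * L := by ring
      rw [e, Real.mul_rpow (by positivity) hL0.le]
    -- lower bound: p1 < 1 - F xK
    have hKt' : (K:ℝ) ^ t' = Real.exp (t' * L) := by
      rw [Real.rpow_def_of_pos hK0]; congr 1; rw [hLdef]; ring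
    have hc1 : p1 ≤ Real.exp ((t' - 1) * L) := by
      have e : (t' - 1) * L = t' * L - L := by ring
      rw [e, Real.exp_sub, ← hKt', ← hKexp, hp1def]
      exact (div_le_div_iff_of_pos_right hK0).mpr hMK
    have hstep : Real.exp ((t' - 1) * L)
        < α / 2 * ((s / lam) ^ (β / γ) * L ^ (β / γ)) * Real.exp (-(s * L)) := by
      have hE : Real.exp (s * L) * Real.exp ((t' - 1) * L) = Real.exp (-(s * L)) := by
        rw [← Real.exp_add]; congr 1
        have hts : t' = 1 - 2 * s := by rw [hsdef]; ring
        rw [hts]; ring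
      calc Real.exp ((t' - 1) * L)
          < (α / 2 * (s / lam) ^ (β / γ) * (L ^ (β / γ) * Real.exp (s * L))) *
              Real.exp ((t' - 1) * L) := lt_mul_of_one_lt_left (Real.exp_pos _) f4
        _ = α / 2 * ((s / lam) ^ (β / γ) * L ^ (β / γ)) *
              (Real.exp (s * L) * Real.exp ((t' - 1) * L)) := by ring
        _ = _ := by rw [hE]
    have hGxK : p1 < 1 - F xK := by
      refine lt_of_lt_of_le (lt_of_le_of_lt hc1 hstep) ?_
      calc α / 2 * ((s / lam) ^ (β / γ) * L ^ (β / γ)) * Real.exp (-(s * L))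
          = 1 / 2 * (α * xK ^ β * Real.exp (-lam * xK ^ γ)) := by
            rw [hxKβ, hexpxK]; ring
        _ ≤ 1 - F xK := (hGbound xK hxKx₀).1
    have hq1 : xK ≤ tailQuantile F p1 := by
      obtain ⟨w, hw⟩ := hne p1 hp1pos
      exact le_tq hFmono hw (by linarith)
    -- upper bound: 1 - F yK ≤ p2
    have hGyK : 1 - F yK ≤ p2 := by
      have e2 : p2 = Real.exp L * Real.exp (-(3 * L)) := by
        have e3 : (Real.exp L) ^ 2 = Real.exp (2 * L) := by
          rw [sq, ← Real.exp_add]; ring_nf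
        rw [hp2def, hKexp, e3, one_div, ← Real.exp_neg, ← Real.exp_add]
        congr 1; ring
      calc 1 - F yK ≤ 2 * (α * yK ^ β * Real.exp (-lam * yK ^ γ)) := (hGbound yK hyKx₀).2
        _ = (2 * α * (3 / lam) ^ (β / γ) * L ^ (β / γ)) * Real.exp (-(3 * L)) := by
            rw [hyKβ, hexpyK]; ring
        _ ≤ Real.exp L * Real.exp (-(3 * L)) :=
            mul_le_mul_of_nonneg_right f5 (Real.exp_pos _).le
        _ = p2 := e2.symm
    have hq2le : tailQuantile F p2 ≤ yK := by
      obtain ⟨z, hz⟩ := hbd p2 hp2lt1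
      exact tq_le hFmono hz (by linarith)
    have hq2ge : x₀ ≤ tailQuantile F p2 := by
      obtain ⟨w, hw⟩ := hne p2 hp2pos
      exact le_tq hFmono hw (by linarith)
    have hq2pos : 0 < tailQuantile F p2 := lt_of_lt_of_le (by linarith) hq2ge
    have hq12 : tailQuantile F p1 ≤ tailQuantile F p2 := by
      obtain ⟨z, hz⟩ := hbd p1 hp1lt1
      obtain ⟨w, hw⟩ := hne p2 hp2pos
      exact tq_mono hFmono hp21 hz hw
    constructor
    · have hxy : (s / 3) ^ (1/γ) = xK / yK := by
        rw [hxKdef, hyKdef, ← Real.div_rpow hsL.le h3L.le]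
        congr 1
        field_simp
      rw [hxy]
      exact div_le_div₀ (le_trans hxK0.le hq1) hq1 hq2pos hq2le
    · rw [div_le_one hq2pos]; exact hq12
  -- conclude
  have hc : (0:ℝ) < (s / 3) ^ (1/γ) := Real.rpow_pos_of_pos (by positivity) _
  refine lt_of_lt_of_le hc (le_liminf_of_le ?_ (key.mono fun K h => h.1))
  exact isCoboundedUnder_ge_of_eventually_le atTop (key.mono fun K h => h.2)
end

section
/- Let F be the CDF of an exponentially-dominated tail distribution with parameters (α, β, λ, γ), and set U_K = ((ln K + √(ln K))/λ)^{1/γ}. (1) For each K, let X_1,…,X_K be random variables each with CDF F (no independence assumption). Then P(max_{1≤k≤K} X_k ≤ U_K) → 1 as K → ∞; in particular P(X_{(K)} ≤ U_K) → 1. (2) For each N, let X_{n,k}, n, k ∈ {1,…,N}, be random variables each with CDF F (no independence assumption). Then P(max_{n} X_{n,(N)} ≤ U_{N²}) → 1 as N → ∞. -/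
open MeasureTheory ProbabilityTheory Filter

section Aux
open Real

lemma psi_tendsto (α lam c : ℝ) (hlam : 0 < lam) :
    Tendsto (fun s : ℝ => α * ((s^2 + s)/lam) ^ c * Real.exp (-s)) atTop (nhds 0) := by
  set C : ℝ := |c| * (Real.log 2 + |Real.log lam|) with hC
  have hEbound : ∀ᶠ s in atTop,
      Real.log ((s^2 + s)/lam) * c - s ≤ C + |c| * (Real.log 2 + |Real.log lam|) - s/2 := by
    filter_upwards [eventually_ge_atTop (max 1 ((8*|c|)^2))] with s hs
    have hs1 : (1:ℝ) ≤ s := le_trans (le_max_left _ _) hs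
    have hs8 : (8*|c|)^2 ≤ s := le_trans (le_max_right _ _) hs
    have hspos : (0:ℝ) < s := by linarith
    have hpos : (0:ℝ) < s^2 + s := by positivity
    have hlog : Real.log ((s^2+s)/lam) = Real.log (s^2+s) - Real.log lam :=
      Real.log_div (ne_of_gt hpos) (ne_of_gt hlam)
    have hlognn : 0 ≤ Real.log (s^2+s) := Real.log_nonneg (by nlinarith)
    have hlog2 : Real.log (s^2+s) ≤ Real.log 2 + 2 * Real.log s := by
      have h1 : Real.log (s^2+s) ≤ Real.log (2*s^2) :=
        Real.log_le_log hpos (by nlinarith)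
      have h2 : Real.log (2*s^2) = Real.log 2 + 2 * Real.log s := by
        rw [Real.log_mul (by norm_num) (by positivity), Real.log_pow]
        norm_num
      linarith
    have hlogs : Real.log s ≤ 2 * Real.sqrt s := by
      have h1 : Real.log (Real.sqrt s) = Real.log s / 2 := Real.log_sqrt (le_of_lt hspos)
      have h2 : Real.log (Real.sqrt s) ≤ Real.sqrt s := Real.log_le_self (Real.sqrt_nonneg s)
      linarith
    have hsq : Real.sqrt s * Real.sqrt s = s := Real.mul_self_sqrt (le_of_lt hspos)
    have h8 : 8*|c| ≤ Real.sqrt s := by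
      have := Real.sqrt_le_sqrt hs8
      rwa [Real.sqrt_sq (by positivity)] at this
    have habs : Real.log ((s^2+s)/lam) * c ≤ |Real.log ((s^2+s)/lam)| * |c| := by
      rw [← abs_mul]; exact le_abs_self _
    have habs2 : |Real.log ((s^2+s)/lam)| ≤ Real.log (s^2+s) + |Real.log lam| := by
      rw [hlog]
      calc |Real.log (s^2+s) - Real.log lam| ≤ |Real.log (s^2+s)| + |Real.log lam| :=
        abs_sub _ _
      _ = Real.log (s^2+s) + |Real.log lam| := by rw [abs_of_nonneg hlognn]
    have hcnn : (0:ℝ) ≤ |c| := abs_nonneg c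
    have hchain : |Real.log ((s^2+s)/lam)| * |c| ≤
        (Real.log 2 + 4 * Real.sqrt s + |Real.log lam|) * |c| := by
      apply mul_le_mul_of_nonneg_right _ hcnn
      calc |Real.log ((s^2+s)/lam)| ≤ Real.log (s^2+s) + |Real.log lam| := habs2
      _ ≤ Real.log 2 + 4 * Real.sqrt s + |Real.log lam| := by nlinarith
    nlinarith [Real.sqrt_nonneg s, mul_le_mul_of_nonneg_right h8 (Real.sqrt_nonneg s),
      Real.log_nonneg (by norm_num : (1:ℝ) ≤ 2), abs_nonneg (Real.log lam)]
  have hE : Tendsto (fun s : ℝ => Real.log ((s^2 + s)/lam) * c - s) atTop atBot := by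
    apply tendsto_atBot_mono' atTop hEbound
    have h1 : Tendsto (fun s : ℝ => -(s/2)) atTop atBot :=
      tendsto_neg_atTop_atBot.comp (tendsto_id.atTop_div_const (by norm_num))
    have := tendsto_atBot_add_const_left atTop (C + |c| * (Real.log 2 + |Real.log lam|)) h1
    exact this.congr fun s => by ring
  have hexp : Tendsto (fun s : ℝ => α * Real.exp (Real.log ((s^2 + s)/lam) * c - s))
      atTop (nhds 0) := by
    have := (Real.tendsto_exp_atBot.comp hE).const_mul α
    simpa using this
  apply hexp.congr'
  filter_upwards [eventually_ge_atTop (1:ℝ)] with s hs1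
  have hpos : (0:ℝ) < (s^2 + s)/lam := by positivity
  rw [Real.rpow_def_of_pos hpos, mul_assoc, ← Real.exp_add, sub_eq_add_neg]

lemma key_tendsto (F : ℝ → ℝ) (α β lam γ : ℝ) (hα : 0 < α) (hlam : 0 < lam) (hγ : 0 < γ)
    (htail : ExpDomTail F α β lam γ) (U : ℕ → ℝ)
    (hU : ∀ K : ℕ, U K = ((Real.log K + Real.sqrt (Real.log K)) / lam) ^ ((1 : ℝ) / γ)) :
    Tendsto (fun K : ℕ => (K:ℝ) * (1 - F (U K))) atTop (nhds 0) := by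
  have hlogK : Tendsto (fun K : ℕ => Real.log K) atTop atTop :=
    Real.tendsto_log_atTop.comp tendsto_natCast_atTop_atTop
  have hsum : Tendsto (fun K : ℕ => Real.log K + Real.sqrt (Real.log K)) atTop atTop :=
    tendsto_atTop_mono (fun K => le_add_of_nonneg_right (Real.sqrt_nonneg _)) hlogK
  have hdiv : Tendsto (fun K : ℕ => (Real.log K + Real.sqrt (Real.log K)) / lam) atTop atTop :=
    hsum.atTop_div_const hlam
  have hUtop : Tendsto U atTop atTop := by
    have := (tendsto_rpow_atTop (by positivity : (0:ℝ) < 1/γ)).comp hdiv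
    exact this.congr fun K => (hU K).symm
  have hG : Tendsto (fun K : ℕ =>
      (1 - F (U K)) / (α * (U K) ^ β * Real.exp (-lam * (U K) ^ γ))) atTop (nhds 1) :=
    htail.comp hUtop
  have hsqrt : Tendsto Real.sqrt atTop atTop :=
    (tendsto_rpow_atTop (by norm_num : (0:ℝ) < 1/2)).congr fun x => (Real.sqrt_eq_rpow x).symm
  have hsl : Tendsto (fun K : ℕ => Real.sqrt (Real.log K)) atTop atTop := hsqrt.comp hlogK
  have hseq : Tendsto (fun K : ℕ =>
      α * ((Real.log K + Real.sqrt (Real.log K))/lam) ^ (β/γ)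
        * Real.exp (-Real.sqrt (Real.log K))) atTop (nhds 0) := by
    have := (psi_tendsto α lam (β/γ) hlam).comp hsl
    apply this.congr'
    filter_upwards [eventually_ge_atTop 1] with K hK
    have h0 : (0:ℝ) ≤ Real.log K := Real.log_nonneg (by exact_mod_cast hK)
    simp only [Function.comp_apply, Real.sq_sqrt h0]
  have hmul : Tendsto (fun K : ℕ =>
      ((1 - F (U K)) / (α * (U K) ^ β * Real.exp (-lam * (U K) ^ γ))) *
      (α * ((Real.log K + Real.sqrt (Real.log K))/lam) ^ (β/γ)
        * Real.exp (-Real.sqrt (Real.log K)))) atTop (nhds 0) := by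
    simpa using hG.mul hseq
  apply hmul.congr'
  filter_upwards [eventually_ge_atTop 2] with K hK
  set L := Real.log K with hLdef
  set t := Real.sqrt L with htdef
  have hKpos : (0:ℝ) < K := by positivity
  have hK1 : (1:ℝ) < K := by exact_mod_cast hK
  have hL : 0 < L := Real.log_pos hK1
  have ht : 0 ≤ t := Real.sqrt_nonneg _
  have ha : 0 < (L + t)/lam := by positivity
  have hUK : U K = ((L + t)/lam) ^ ((1:ℝ)/γ) := hU K
  have hUpos : 0 < U K := by rw [hUK]; exact Real.rpow_pos_of_pos ha _
  have hUγ : (U K) ^ γ = (L + t)/lam := by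
    rw [hUK, ← Real.rpow_mul ha.le]
    rw [show (1:ℝ)/γ * γ = 1 by field_simp, Real.rpow_one]
  have hUβ : (U K) ^ β = ((L + t)/lam) ^ (β/γ) := by
    rw [hUK, ← Real.rpow_mul ha.le]
    congr 1; field_simp
  have hexp : Real.exp (-lam * (U K) ^ γ) = ((K:ℝ))⁻¹ * Real.exp (-t) := by
    rw [hUγ, show -lam * ((L + t)/lam) = -L + -t by field_simp; ring,
      Real.exp_add, Real.exp_neg, Real.exp_log hKpos]
  have hD : α * (U K) ^ β * Real.exp (-lam * (U K) ^ γ) ≠ 0 := by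
    have h1 : (0:ℝ) < (U K) ^ β := Real.rpow_pos_of_pos hUpos _
    positivity
  have hfrac : (1 - F (U K)) / (α * (U K) ^ β * Real.exp (-lam * (U K) ^ γ)) *
      (α * (U K) ^ β * Real.exp (-lam * (U K) ^ γ)) = 1 - F (U K) :=
    div_mul_cancel₀ _ hD
  have hKne : (K:ℝ) ≠ 0 := ne_of_gt hKpos
  calc ((1 - F (U K)) / (α * (U K) ^ β * Real.exp (-lam * (U K) ^ γ))) *
      (α * ((L + t)/lam) ^ (β/γ) * Real.exp (-t))
      = ((1 - F (U K)) / (α * (U K) ^ β * Real.exp (-lam * (U K) ^ γ))) *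
        ((K:ℝ) * (α * (U K) ^ β * Real.exp (-lam * (U K) ^ γ))) := by
        rw [hUβ, hexp]; field_simp
    _ = (K:ℝ) * (1 - F (U K)) := by
        rw [show ((1 - F (U K)) / (α * (U K) ^ β * Real.exp (-lam * (U K) ^ γ))) *
          ((K:ℝ) * (α * (U K) ^ β * Real.exp (-lam * (U K) ^ γ)))
          = (K:ℝ) * (((1 - F (U K)) / (α * (U K) ^ β * Real.exp (-lam * (U K) ^ γ))) *
            (α * (U K) ^ β * Real.exp (-lam * (U K) ^ γ))) by ring, hfrac]



lemma orderStat_max_iff {K : ℕ} (hK : 1 ≤ K) (v : Fin K → ℝ) (u : ℝ) :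
    orderStat v K ≤ u ↔ ∀ k, v k ≤ u := by
  set l : List ℝ := (Finset.univ.val.map v).sort (· ≤ ·) with hl
  have hlen : l.length = K := by
    simp [hl, Multiset.length_sort]
  have hsort : l.Pairwise (· ≤ ·) := Multiset.pairwise_sort _ _
  have hmem : ∀ x : ℝ, x ∈ l ↔ ∃ k, v k = x := by
    intro x
    rw [hl, Multiset.mem_sort, Multiset.mem_map]
    simp
  have hidx : K - 1 < l.length := by omega
  have hgetD : orderStat v K = l[K-1] := List.getD_eq_getElem l 0 hidx
  constructor
  · intro h k
    have hk : v k ∈ l := (hmem _).2 ⟨k, rfl⟩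
    obtain ⟨i, hi, hvi⟩ := List.getElem_of_mem hk
    have : l[i] ≤ l[K-1] := by
      rcases eq_or_lt_of_le (by omega : i ≤ K - 1) with he | hlt
      · subst he; exact le_refl _
      · exact List.pairwise_iff_getElem.1 hsort i (K-1) hi hidx hlt
    rw [hgetD] at h
    rw [← hvi]
    exact le_trans this h
  · intro h
    rw [hgetD]
    obtain ⟨k, hk⟩ := (hmem _).1 (l.getElem_mem hidx)
    rw [← hk]; exact h k


lemma prob_bound {Ω : Type*} [MeasurableSpace Ω] (μ : Measure Ω) [IsProbabilityMeasure μ]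
    {ι : Type*} [Fintype ι] (X : ι → Ω → ℝ) (hX : ∀ i, Measurable (X i))
    (F : ℝ → ℝ) (u : ℝ) (hcdf : ∀ i, (μ {ω | X i ω ≤ u}).toReal = F u) :
    1 - ENNReal.ofReal ((Fintype.card ι) * (1 - F u)) ≤ μ {ω | ∀ i, X i ω ≤ u} := by
  rcases isEmpty_or_nonempty ι with h | h
  · have : {ω | ∀ i, X i ω ≤ u} = Set.univ := by
      ext ω; simp [IsEmpty.forall_iff]
    rw [this, measure_univ]
    exact tsub_le_self.trans le_rfl
  have hFnn : 0 ≤ F u := by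
    rw [← hcdf (Classical.arbitrary ι)]; exact ENNReal.toReal_nonneg
  have hone : ∀ i, μ {ω | X i ω ≤ u} = ENNReal.ofReal (F u) := fun i => by
    rw [← hcdf i, ENNReal.ofReal_toReal (measure_ne_top μ _)]
  have hcompl : ∀ i, μ {ω | ¬ X i ω ≤ u} = ENNReal.ofReal (1 - F u) := by
    intro i
    have hms : MeasurableSet {ω | X i ω ≤ u} := (hX i) measurableSet_Iic
    have : {ω | ¬ X i ω ≤ u} = {ω | X i ω ≤ u}ᶜ := rfl
    rw [this, measure_compl hms (measure_ne_top μ _), measure_univ, hone i,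
      ENNReal.ofReal_sub _ hFnn, ENNReal.ofReal_one]
  have hsub : {ω | ∀ i, X i ω ≤ u}ᶜ ⊆ ⋃ i, {ω | ¬ X i ω ≤ u} := by
    intro ω hω
    simp only [Set.mem_compl_iff, Set.mem_setOf_eq, not_forall] at hω
    obtain ⟨i, hi⟩ := hω
    exact Set.mem_iUnion.2 ⟨i, hi⟩
  have hAc : μ {ω | ∀ i, X i ω ≤ u}ᶜ ≤ ENNReal.ofReal ((Fintype.card ι) * (1 - F u)) := by
    calc μ {ω | ∀ i, X i ω ≤ u}ᶜ ≤ μ (⋃ i, {ω | ¬ X i ω ≤ u}) := measure_mono hsub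
    _ ≤ ∑' i, μ {ω | ¬ X i ω ≤ u} := measure_iUnion_le _
    _ = (Fintype.card ι) * ENNReal.ofReal (1 - F u) := by
        simp only [hcompl, tsum_fintype, Finset.sum_const, Finset.card_univ, nsmul_eq_mul]
    _ = ENNReal.ofReal ((Fintype.card ι) * (1 - F u)) := by
        rw [ENNReal.ofReal_mul (by positivity), ENNReal.ofReal_natCast]
  have huniv : (1 : ENNReal) ≤ μ {ω | ∀ i, X i ω ≤ u} + μ {ω | ∀ i, X i ω ≤ u}ᶜ := by
    have := measure_union_le (μ := μ) {ω | ∀ i, X i ω ≤ u} {ω | ∀ i, X i ω ≤ u}ᶜ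
    rwa [Set.union_compl_self, measure_univ] at this
  calc 1 - ENNReal.ofReal ((Fintype.card ι) * (1 - F u))
      ≤ (μ {ω | ∀ i, X i ω ≤ u} + μ {ω | ∀ i, X i ω ≤ u}ᶜ) - ENNReal.ofReal ((Fintype.card ι) * (1 - F u)) := tsub_le_tsub_right huniv _
    _ ≤ μ {ω | ∀ i, X i ω ≤ u} := by
        rw [tsub_le_iff_right]
        exact add_le_add le_rfl hAc

end Aux

/-- with `U_K = ((ln K + √(ln K))/λ)^{1/γ}` and `F` an exponentially-dominated
tail CDF: (1) for any random variables `X_1,…,X_K` each with CDF `F` (no independence),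
`P(max_k X_k ≤ U_K) → 1` (equivalently `P(X_{(K)} ≤ U_K) → 1`); (2) for any array
`X_{n,k}`, `n,k ∈ {1,…,N}`, each entry with CDF `F`, `P(max_n X_{n,(N)} ≤ U_{N²}) → 1`. -/

theorem stmt_17
    (F : ℝ → ℝ) (hFcont : Continuous F)
    (α β lam γ : ℝ) (hα : 0 < α) (hlam : 0 < lam) (hγ : 0 < γ)
    (htail : ExpDomTail F α β lam γ)
    (U : ℕ → ℝ)
    (hU : ∀ K : ℕ, U K = ((Real.log K + Real.sqrt (Real.log K)) / lam) ^ ((1 : ℝ) / γ)) :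
    (∀ (Ω : ℕ → Type) (inst : ∀ K, MeasurableSpace (Ω K)) (μ : ∀ K, Measure (Ω K)),
      (∀ K, IsProbabilityMeasure (μ K)) →
      ∀ X : ∀ K, Fin K → Ω K → ℝ, (∀ K k, Measurable (X K k)) →
      (∀ K (k : Fin K), cdfOf (μ K) (X K k) = F) →
      Tendsto (fun K => μ K {ω | orderStat (fun k => X K k ω) K ≤ U K}) atTop (nhds 1)) ∧
    (∀ (Ω : ℕ → Type) (inst : ∀ N, MeasurableSpace (Ω N)) (μ : ∀ N, Measure (Ω N)),
      (∀ N, IsProbabilityMeasure (μ N)) →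
      ∀ X : ∀ N, Fin N → Fin N → Ω N → ℝ, (∀ N n k, Measurable (X N n k)) →
      (∀ N (n k : Fin N), cdfOf (μ N) (X N n k) = F) →
      Tendsto (fun N => μ N {ω | ∀ n : Fin N, orderStat (fun k => X N n k ω) N ≤ U (N ^ 2)})
        atTop (nhds 1)) := by
  have hg : Tendsto (fun K : ℕ => (K:ℝ) * (1 - F (U K))) atTop (nhds 0) :=
    key_tendsto F α β lam γ hα hlam hγ htail U hU
  have h0 : Tendsto (fun K : ℕ => ENNReal.ofReal ((K:ℝ) * (1 - F (U K)))) atTop (nhds 0) := by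
    have := ENNReal.tendsto_ofReal hg
    simpa using this
  have hlow : Tendsto (fun K : ℕ => (1:ENNReal) - ENNReal.ofReal ((K:ℝ) * (1 - F (U K))))
      atTop (nhds 1) := by
    have := ENNReal.Tendsto.sub (tendsto_const_nhds : Tendsto (fun _ : ℕ => (1:ENNReal)) atTop (nhds 1)) h0
      (Or.inl ENNReal.one_ne_top)
    simpa using this
  constructor
  · intro Ω inst μ hprob X hmeas hcdf
    apply tendsto_of_tendsto_of_tendsto_of_le_of_le' hlow tendsto_const_nhds
    · filter_upwards [eventually_ge_atTop 1] with K hK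
      haveI := hprob K
      have hset : {ω | orderStat (fun k => X K k ω) K ≤ U K} = {ω | ∀ k, X K k ω ≤ U K} := by
        ext ω; exact orderStat_max_iff hK _ _
      rw [hset]
      have hb := prob_bound (μ K) (X K) (hmeas K) F (U K)
        (fun k => congrFun (hcdf K k) (U K))
      simpa using hb
    · exact Eventually.of_forall fun K => by haveI := hprob K; exact prob_le_one
  · intro Ω inst μ hprob X hmeas hcdf
    have hsq : Tendsto (fun N : ℕ => N ^ 2) atTop atTop :=
      tendsto_atTop_mono (fun n => Nat.le_self_pow (by norm_num) n) tendsto_id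
    have hlow2 : Tendsto (fun N : ℕ =>
        (1:ENNReal) - ENNReal.ofReal (((N^2 : ℕ):ℝ) * (1 - F (U (N^2))))) atTop (nhds 1) :=
      hlow.comp hsq
    apply tendsto_of_tendsto_of_tendsto_of_le_of_le' hlow2 tendsto_const_nhds
    · filter_upwards [eventually_ge_atTop 1] with N hN
      haveI := hprob N
      have hset : {ω | ∀ n : Fin N, orderStat (fun k => X N n k ω) N ≤ U (N ^ 2)}
          = {ω | ∀ p : Fin N × Fin N, X N p.1 p.2 ω ≤ U (N ^ 2)} := by
        ext ω
        simp only [Set.mem_setOf_eq]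
        constructor
        · intro h p
          exact (orderStat_max_iff hN _ _).1 (h p.1) p.2
        · intro h n
          exact (orderStat_max_iff hN _ _).2 fun k => h (n, k)
      rw [hset]
      have hb := prob_bound (μ N) (fun p : Fin N × Fin N => X N p.1 p.2)
        (fun p => hmeas N p.1 p.2) F (U (N^2))
        (fun p => congrFun (hcdf N p.1 p.2) (U (N^2)))
      have hcard : ((Fintype.card (Fin N × Fin N)):ℝ) = ((N^2 : ℕ):ℝ) := by
        simp [Fintype.card_prod]; push_cast; ring
      rw [hcard] at hb
      exact hb
    · exact Eventually.of_forall fun N => by haveI := hprob N; exact prob_le_one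
end

section
/- Fix an integer m ≥ 0 and ε > 0. Let F be a continuous unbounded CDF, let M_K be a sequence of integers with M_K → ∞, M_K/K → 0 and M_K ≥ (m+1)(1+ε)·ln K, and set L_K = q̄_F(e²·M_K/K), where q̄_F(p) = min{x : F(x) ≥ 1 − p}. (1) There exists K₀ such that for all K > K₀: whenever X_1,…,X_K are identically distributed with CDF F and m-dependent, P(X_{(K−M_K+1)} ≥ L_K) ≥ 1 − 2(m+1)/K^{4(1+ε)}. (2) If for each of N = K rows the variables X_{n,1},…,X_{n,K} are identically distributed with CDF F and m-dependent, then P(min_{1≤n≤N} X_{n,(K−M_K+1)} ≥ L_K) → 1 as K → ∞. -/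
open MeasureTheory ProbabilityTheory Filter

open scoped ENNReal NNReal


theorem sorted_getD_iff (l : List ℝ) (hl : l.Pairwise (· ≤ ·)) (L : ℝ) (i : ℕ)
    (hi : i < l.length) :
    L ≤ l.getD i 0 ↔ l.length - i ≤ l.countP (fun x => decide (L ≤ x)) := by
  rw [List.getD_eq_getElem l 0 hi]
  have hpair : ∀ (a b : ℕ) (hab : a < b) (hb : b < l.length),
      l[a]'(hab.trans hb) ≤ l[b]'hb := by
    intro a b hab hb
    exact List.pairwise_iff_getElem.mp hl a b (hab.trans hb) hb hab
  constructor
  · intro h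
    have hdrop : (l.drop i).countP (fun x => decide (L ≤ x)) = (l.drop i).length := by
      rw [List.countP_eq_length]
      intro a ha
      obtain ⟨j, hj, rfl⟩ := List.mem_iff_getElem.mp ha
      have hj' : i + j < l.length := by simp [List.length_drop] at hj; omega
      rw [List.getElem_drop]
      have : L ≤ l[i + j]'hj' := by
        rcases Nat.eq_zero_or_pos j with h0 | h0
        · subst h0; simpa using h
        · exact h.trans (hpair i (i+j) (by omega) hj')
      simpa using this
    have hap := List.countP_append (p := fun x => decide (L ≤ x)) (l₁ := l.take i) (l₂ := l.drop i)
    rw [List.take_append_drop] at hap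
    rw [hap, hdrop, List.length_drop]
    omega
  · intro h
    by_contra hc
    push_neg at hc
    have htake : (l.take (i+1)).countP (fun x => decide (L ≤ x)) = 0 := by
      rw [List.countP_eq_zero]
      intro a ha
      obtain ⟨j, hj, rfl⟩ := List.mem_iff_getElem.mp ha
      have hj' : j < i + 1 := by simp [List.length_take] at hj; omega
      rw [List.getElem_take]
      have hle : l[j]'(by omega) ≤ l[i] := by
        rcases Nat.lt_or_ge j i with h0 | h0
        · exact hpair j i h0 hi
        · have : j = i := by omega
          subst this; rfl
      simp only [decide_eq_true_eq]
      intro hL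
      exact absurd (hL.trans hle) (not_le.mpr hc)
    have hap := List.countP_append (p := fun x => decide (L ≤ x)) (l₁ := l.take (i+1)) (l₂ := l.drop (i+1))
    rw [List.take_append_drop] at hap
    rw [hap, htake] at h
    have hlen := List.countP_le_length (l := l.drop (i+1)) (p := fun x => decide (L ≤ x))
    rw [List.length_drop] at hlen
    omega

theorem orderStat_ge_iff {K : ℕ} (v : Fin K → ℝ) (M : ℕ) (h1 : 1 ≤ M) (h2 : M ≤ K) (L : ℝ) :
    L ≤ orderStat v (K - M + 1) ↔
      M ≤ (Finset.univ.filter (fun k => L ≤ v k)).card := by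
  classical
  unfold orderStat
  have hidx : K - M + 1 - 1 = K - M := by omega
  rw [hidx]
  set t : Multiset ℝ := Finset.univ.val.map v with ht
  set l := t.sort (· ≤ ·) with hlv
  have hlen : l.length = K := by
    simp [hlv, ht, Multiset.length_sort]
  have hsorted : l.Pairwise (· ≤ ·) := Multiset.pairwise_sort _ _
  have hi : K - M < l.length := by omega
  rw [sorted_getD_iff l hsorted L (K - M) hi]
  have hcount : l.countP (fun x => decide (L ≤ x)) =
      (Finset.univ.filter (fun k => L ≤ v k)).card := by
    have hml : (l : Multiset ℝ) = t := Multiset.sort_eq _ _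
    calc l.countP (fun x => decide (L ≤ x))
        = Multiset.countP (fun x => L ≤ x) (l : Multiset ℝ) := (Multiset.coe_countP _ _).symm
      _ = Multiset.countP (fun x => L ≤ x) t := by rw [hml]
      _ = Multiset.card (Multiset.filter (fun k => L ≤ v k) Finset.univ.val) := by
          rw [ht, Multiset.countP_map]
      _ = (Finset.univ.filter (fun k => L ≤ v k)).card := rfl
  rw [hcount, hlen]
  omega

theorem tail_prob_ge {Ω : Type*} [MeasurableSpace Ω] (μ : Measure Ω) [IsProbabilityMeasure μ]
    (X : Ω → ℝ) (hX : Measurable X) (F : ℝ → ℝ) (hF : cdfOf μ X = F)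
    (hFcont : Continuous F) (p : ℝ) (hp0 : 0 < p) (hp1 : p < 1) :
    ENNReal.ofReal p ≤ μ {ω | tailQuantile F p ≤ X ω} := by
  set ν : Measure ℝ := μ.map X with hν
  have hνprob : IsProbabilityMeasure ν := Measure.isProbabilityMeasure_map hX.aemeasurable
  have hFcdf : F = cdf ν := by
    funext x
    rw [← hF]
    simp only [cdfOf, cdf_eq_real, Measure.real]
    rw [hν, Measure.map_apply hX measurableSet_Iic]
    rfl
  have hmono : Monotone F := hFcdf ▸ monotone_cdf ν
  have hTop : Tendsto F atTop (nhds 1) := hFcdf ▸ tendsto_cdf_atTop ν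
  have hBot : Tendsto F atBot (nhds 0) := hFcdf ▸ tendsto_cdf_atBot ν
  set A : Set ℝ := {x | 1 - p ≤ F x} with hA
  have hAne : A.Nonempty := by
    obtain ⟨x, hx⟩ := (hTop.eventually (eventually_gt_nhds (by linarith : 1 - p < 1))).exists
    exact ⟨x, le_of_lt hx⟩
  obtain ⟨x₀, hx₀⟩ := (hBot.eventually (eventually_lt_nhds (by linarith : (0:ℝ) < 1 - p))).exists
  have hAbdd : BddBelow A := by
    refine ⟨x₀, fun a ha => ?_⟩
    by_contra hc
    push_neg at hc
    exact absurd ((hmono hc.le).trans_lt hx₀) (not_lt.mpr ha)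
  have hAclosed : IsClosed A := (isClosed_Ici).preimage hFcont
  set L₀ : ℝ := tailQuantile F p with hL₀
  have hLA : L₀ ∈ A := hAclosed.csInf_mem hAne hAbdd
  have hFL : F L₀ ≤ 1 - p := by
    by_contra h
    push_neg at h
    have hopen : IsOpen (F ⁻¹' Set.Ioi (1 - p)) := (isOpen_Ioi).preimage hFcont
    obtain ⟨δ, hδ, hball⟩ := Metric.isOpen_iff.mp hopen L₀ h
    have hx : L₀ - δ/2 ∈ A := by
      have hmem : L₀ - δ/2 ∈ Metric.ball L₀ δ := by
        rw [Metric.mem_ball, Real.dist_eq, abs_of_nonpos (by linarith)]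
        linarith
      have h2 := hball hmem
      simp only [Set.mem_preimage, Set.mem_Ioi] at h2
      exact le_of_lt h2
    have := csInf_le hAbdd hx
    simp only [hL₀, tailQuantile] at *
    linarith [this]
  have hsub : (X ⁻¹' Set.Iic L₀)ᶜ ⊆ {ω | L₀ ≤ X ω} := by
    intro ω hω
    simp only [Set.mem_compl_iff, Set.mem_preimage, Set.mem_Iic, not_le] at hω
    exact le_of_lt hω
  have hIic : μ (X ⁻¹' Set.Iic L₀) = ENNReal.ofReal (F L₀) := by
    have h1 : μ (X ⁻¹' Set.Iic L₀) = ν (Set.Iic L₀) := by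
      rw [hν, Measure.map_apply hX measurableSet_Iic]
    rw [h1, hFcdf, ← ofReal_cdf (μ := ν) L₀]
  calc ENNReal.ofReal p = ENNReal.ofReal 1 - ENNReal.ofReal (1 - p) := by
        rw [← ENNReal.ofReal_sub _ (by linarith)]
        norm_num
    _ ≤ 1 - μ (X ⁻¹' Set.Iic L₀) := by
        rw [hIic, ENNReal.ofReal_one]
        exact tsub_le_tsub_left (ENNReal.ofReal_le_ofReal hFL) 1
    _ = μ (X ⁻¹' Set.Iic L₀)ᶜ := by
        rw [measure_compl (hX measurableSet_Iic) (measure_ne_top μ _), measure_univ]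
    _ ≤ μ {ω | L₀ ≤ X ω} := measure_mono hsub

theorem class_chernoff {Ω : Type*} [MeasurableSpace Ω] (μ : Measure Ω) [IsProbabilityMeasure μ]
    {K : ℕ} (X : Fin K → Ω → ℝ) (hX : ∀ k, Measurable (X k)) (L₀ : ℝ)
    (S : Finset (Fin K))
    (hindep : iIndepFun (fun i : S => X i.1) μ)
    (p : ℝ) (hp : ∀ k, ENNReal.ofReal p ≤ μ {ω | L₀ ≤ X k ω}) (c : ℝ) :
    (μ {ω | (∑ k ∈ S, (if L₀ ≤ X k ω then (1:ℝ) else 0)) ≤ c}).toReal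
      ≤ Real.exp (2*c - S.card * ((1 - Real.exp (-2)) * p)) := by
  classical
  set g : ℝ → ℝ := fun x => if L₀ ≤ x then 1 else 0 with hg
  have hgmeas : Measurable g := Measurable.ite measurableSet_Ici measurable_const measurable_const
  set Y : S → Ω → ℝ := fun i => g ∘ X i.1 with hY
  have hYmeas : ∀ i : S, Measurable (Y i) := fun i => hgmeas.comp (hX i.1)
  have hYindep : iIndepFun Y μ :=
    hindep.comp (fun _ => g) (fun _ => hgmeas)
  have hexpY : ∀ (i : S), (fun ω => Real.exp (-2 * Y i ω))
      = fun ω => (Real.exp (-2) - 1) * Y i ω + 1 := by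
    intro i
    funext ω
    by_cases h : L₀ ≤ X i.1 ω <;> simp [hY, hg, h]
  have hsetmeas : ∀ k : Fin K, MeasurableSet {ω | L₀ ≤ X k ω} := fun k =>
    (hX k) measurableSet_Ici
  have hYint : ∀ i : S, Integrable (Y i) μ := by
    intro i
    have : Y i = Set.indicator {ω | L₀ ≤ X i.1 ω} (fun _ => (1:ℝ)) := by
      funext ω
      by_cases h : L₀ ≤ X i.1 ω <;> simp [hY, hg, h, Set.indicator_apply]
    rw [this]
    exact (integrable_const 1).indicator (hsetmeas i.1)
  have hintY : ∀ i : S, Integrable (fun ω => Real.exp (-2 * Y i ω)) μ := by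
    intro i
    rw [hexpY i]
    exact ((hYint i).const_mul _).add (integrable_const 1)
  have hintexp : ∀ i : S, i ∈ Finset.univ → Integrable (fun ω => Real.exp (-2 * Y i ω)) μ :=
    fun i _ => hintY i
  have hmgf : ∀ i : S, mgf (Y i) μ (-2) ≤ Real.exp (-((1 - Real.exp (-2)) * p)) := by
    intro i
    have hIY : ∫ ω, Y i ω ∂μ = (μ {ω | L₀ ≤ X i.1 ω}).toReal := by
      have : Y i = Set.indicator {ω | L₀ ≤ X i.1 ω} (fun _ => (1:ℝ)) := by
        funext ω
        by_cases h : L₀ ≤ X i.1 ω <;> simp [hY, hg, h, Set.indicator_apply]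
      rw [this, integral_indicator_const _ (hsetmeas i.1)]
      simp
      rfl
    have hpq : p ≤ (μ {ω | L₀ ≤ X i.1 ω}).toReal :=
      (ENNReal.ofReal_le_iff_le_toReal (measure_ne_top μ _)).mp (hp i.1)
    have hmgf_eq : mgf (Y i) μ (-2)
        = 1 + (Real.exp (-2) - 1) * (μ {ω | L₀ ≤ X i.1 ω}).toReal := by
      unfold mgf
      rw [show (fun ω => Real.exp (-2 * Y i ω))
          = fun ω => (Real.exp (-2) - 1) * Y i ω + 1 from hexpY i]
      rw [integral_add (((hYint i).const_mul _)) (integrable_const 1)]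
      rw [integral_const_mul, hIY]
      simp [add_comm]
    rw [hmgf_eq]
    have he2 : Real.exp (-2) - 1 < 0 := by
      have := Real.exp_lt_one_iff.mpr (by norm_num : (-2:ℝ) < 0)
      linarith
    have hstep : 1 + (Real.exp (-2) - 1) * (μ {ω | L₀ ≤ X i.1 ω}).toReal
        ≤ 1 + (Real.exp (-2) - 1) * p := by nlinarith
    refine hstep.trans ?_
    have := Real.add_one_le_exp (-((1 - Real.exp (-2)) * p))
    linarith
  set Z : Ω → ℝ := ∑ i : S, Y i with hZ
  have hintZ : Integrable (fun ω => Real.exp (-2 * Z ω)) μ :=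
    hYindep.integrable_exp_mul_sum (fun i => hYmeas i) hintexp
  have hcher := measure_le_le_exp_mul_mgf (μ := μ) (X := Z) (t := -2) c (by norm_num) hintZ
  have hmgfZ : mgf Z μ (-2) = ∏ i : S, mgf (Y i) μ (-2) :=
    hYindep.mgf_sum (fun i => hYmeas i) Finset.univ
  have hprod : ∏ i : S, mgf (Y i) μ (-2) ≤ Real.exp (-((1 - Real.exp (-2)) * p)) ^ S.card := by
    calc ∏ i : S, mgf (Y i) μ (-2) ≤ ∏ _i : S, Real.exp (-((1 - Real.exp (-2)) * p)) :=
          Finset.prod_le_prod (fun i _ => mgf_nonneg) (fun i _ => hmgf i)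
      _ = Real.exp (-((1 - Real.exp (-2)) * p)) ^ S.card := by
          rw [Finset.prod_const, Finset.card_univ, Fintype.card_coe]
  have hev : {ω | (∑ k ∈ S, (if L₀ ≤ X k ω then (1:ℝ) else 0)) ≤ c} = {ω | Z ω ≤ c} := by
    ext ω
    simp only [Set.mem_setOf_eq, hZ, Finset.sum_apply]
    rw [← Finset.sum_coe_sort S (fun k => if L₀ ≤ X k ω then (1:ℝ) else 0)]
    rfl
  rw [hev]
  refine hcher.trans ?_
  have hmain : Real.exp (-(-2) * c) * mgf Z μ (-2)
      ≤ Real.exp (2*c) * (Real.exp (-((1 - Real.exp (-2)) * p)) ^ S.card) := by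
    rw [show -(-2:ℝ) = 2 by norm_num]
    exact mul_le_mul_of_nonneg_left (by rw [hmgfZ]; exact hprod) (Real.exp_pos _).le
  refine hmain.trans ?_
  rw [← Real.exp_nat_mul, ← Real.exp_add]
  apply le_of_eq
  congr 1
  ring

theorem card_class (K m r : ℕ) (hr : r ≤ m) :
    K / (m+1) ≤ ((Finset.univ : Finset (Fin K)).filter
      (fun k : Fin K => (k : ℕ) % (m+1) = r)).card := by
  classical
  set t := K / (m+1) with ht
  rcases Nat.eq_zero_or_pos t with h0 | h0
  · omega
  have hbound : ∀ j : Fin t, r + j.1 * (m+1) < K := by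
    intro j
    have h1 : (j.1 + 1) * (m+1) ≤ t * (m+1) := Nat.mul_le_mul_right _ (by omega)
    have h2 : t * (m+1) ≤ K := by rw [ht]; exact Nat.div_mul_le_self K (m+1)
    have h3 : (j.1 + 1) * (m+1) = j.1 * (m+1) + (m+1) := by ring
    omega
  set f : Fin t → Fin K := fun j => ⟨r + j.1 * (m+1), hbound j⟩ with hf
  have hmaps : ∀ j ∈ (Finset.univ : Finset (Fin t)),
      f j ∈ (Finset.univ : Finset (Fin K)).filter (fun k : Fin K => (k : ℕ) % (m+1) = r) := by
    intro j _
    simp only [Finset.mem_filter, Finset.mem_univ, true_and, hf]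
    show (r + j.1 * (m+1)) % (m+1) = r
    rw [Nat.add_mul_mod_self_right]
    exact Nat.mod_eq_of_lt (by omega)
  have hinj : Set.InjOn f (Finset.univ : Finset (Fin t)) := by
    intro a _ b _ hab
    have h1 : r + a.1 * (m+1) = r + b.1 * (m+1) := congrArg Fin.val hab
    have h2 : a.1 = b.1 :=
      Nat.eq_of_mul_eq_mul_right (by omega) (Nat.add_left_cancel h1)
    exact Fin.ext h2
  have := Finset.card_le_card_of_injOn f hmaps hinj
  simpa using this

theorem class_pairwise (K m r : ℕ) :
    ∀ i ∈ ((Finset.univ : Finset (Fin K)).filter (fun k : Fin K => (k : ℕ) % (m+1) = r)),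
    ∀ j ∈ ((Finset.univ : Finset (Fin K)).filter (fun k : Fin K => (k : ℕ) % (m+1) = r)),
      i ≠ j → (m : ℤ) < |(i : ℤ) - (j : ℤ)| := by
  classical
  have key : ∀ i j : Fin K, (i:ℕ) % (m+1) = r → (j:ℕ) % (m+1) = r → (i:ℕ) < (j:ℕ) →
      (m : ℤ) < |(i : ℤ) - (j : ℤ)| := by
    intro i j hi hj hij
    have hmod : (i:ℕ) % (m+1) = (j:ℕ) % (m+1) := by rw [hi, hj]
    have hdvd : (m+1) ∣ (j:ℕ) - (i:ℕ) := (Nat.modEq_iff_dvd' hij.le).mp hmod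
    have hle : m + 1 ≤ (j:ℕ) - (i:ℕ) := Nat.le_of_dvd (by omega) hdvd
    have hii : ((i : ℤ)) = ((i : ℕ) : ℤ) := by push_cast; ring
    have hjj : ((j : ℤ)) = ((j : ℕ) : ℤ) := by push_cast; ring
    have hnn : (0:ℤ) ≤ ((j:ℕ):ℤ) - ((i:ℕ):ℤ) := by omega
    rw [hii, hjj, abs_sub_comm, abs_of_nonneg hnn]
    omega
  intro i hi j hj hne
  simp only [Finset.mem_filter, Finset.mem_univ, true_and] at hi hj
  rcases Nat.lt_or_ge (i:ℕ) (j:ℕ) with h | h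
  · exact key i j hi hj h
  · have hlt : (j:ℕ) < (i:ℕ) := by
      rcases Nat.lt_or_ge (j:ℕ) (i:ℕ) with h' | h'
      · exact h'
      · exact absurd (Fin.ext (le_antisymm h' h)) hne
    rw [abs_sub_comm]
    exact key j i hj hi hlt

theorem exponent_bound (ε A B mm n q lam : ℝ) (e2 : ℝ)
    (hε : 0 < ε) (hA : 1 ≤ A) (hmm : 1 ≤ mm) (hB : 100*mm ≤ B)
    (hlam : 0 ≤ lam) (hM : mm*(1+ε)*lam ≤ A)
    (hn : B - mm + 1 ≤ mm * n)
    (he : (6.389:ℝ) ≤ e2 - 1)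
    (hqB : q * B = (e2 - 1) * A)
    (c : ℝ) (hc : c * mm = A) :
    2*c - n*q ≤ -(lam * (4*(1+ε))) := by
  have hmm0 : 0 < mm := by linarith
  have hB0 : 0 < B := by linarith
  have hqB0 : 0 ≤ q * B := by rw [hqB]; nlinarith
  have h1 : (B - mm + 1)*((e2-1)*A) ≤ (mm*n)*(q*B) := by
    rw [← hqB]
    exact mul_le_mul_of_nonneg_right hn hqB0
  have h2 : lam*(4*(1+ε))*mm*B ≤ 4*A*B := by nlinarith
  have h3 : 6*B ≤ (B - mm + 1)*(e2-1) := by nlinarith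
  have key : 2*A*B - (mm*n)*(q*B) + lam*(4*(1+ε))*mm*B ≤ 0 := by nlinarith
  have key' : (2*c - n*q + lam*(4*(1+ε))) * (mm*B) ≤ 0 * (mm*B) := by
    have hexp : (2*c - n*q + lam*(4*(1+ε))) * (mm*B)
        = 2*A*B - (mm*n)*(q*B) + lam*(4*(1+ε))*mm*B := by
      rw [← hc]; ring
    rw [hexp, zero_mul]
    exact key
  have := le_of_mul_le_mul_right key' (by positivity : 0 < mm*B)
  linarith

theorem key_bound (m : ℕ) (ε : ℝ) (hε : 0 < ε) (F : ℝ → ℝ) (hFcont : Continuous F)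
    (K MK : ℕ) (LK : ℝ) (hLK : LK = tailQuantile F (Real.exp 2 * MK / K))
    (hM3 : ((m : ℝ) + 1) * (1 + ε) * Real.log K ≤ MK)
    (h1M : 1 ≤ MK) (hM8 : (MK : ℝ) ≤ (K : ℝ) / 8) (hK100 : 100 * (m+1) ≤ K)
    (Ω : Type*) [MeasurableSpace Ω] (μ : Measure Ω) [hprob : IsProbabilityMeasure μ]
    (X : Fin K → Ω → ℝ) (hXm : ∀ k, Measurable (X k)) (hcdf : ∀ k, cdfOf μ (X k) = F)
    (hdep : MDepFam μ m X) :
    MeasurableSet {ω | LK ≤ orderStat (fun k => X k ω) (K - MK + 1)} ∧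
    μ {ω | LK ≤ orderStat (fun k => X k ω) (K - MK + 1)}ᶜ ≤
      ENNReal.ofReal (2 * ((m:ℝ)+1) * ((K:ℝ) ^ (4*(1+ε)))⁻¹) := by
  classical
  have hK1 : 1 ≤ K := by omega
  have hKpos : (0:ℝ) < K := by exact_mod_cast Nat.pos_of_ne_zero (by omega)
  have he1 : (2.7182818283 : ℝ) < Real.exp 1 := Real.exp_one_gt_d9
  have he2 : Real.exp 1 < 2.7182818286 := Real.exp_one_lt_d9
  have hE : Real.exp 2 = Real.exp 1 * Real.exp 1 := by
    rw [← Real.exp_add]; norm_num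
  have hE1 : (7.389 : ℝ) ≤ Real.exp 2 := by nlinarith
  have hE2 : Real.exp 2 ≤ (7.3890562 : ℝ) := by nlinarith
  set p : ℝ := Real.exp 2 * MK / K with hp
  have hMK1 : (1:ℝ) ≤ MK := by exact_mod_cast h1M
  have hp0 : 0 < p := by
    apply div_pos (by nlinarith) hKpos
  have hp1 : p < 1 := by
    rw [hp, div_lt_one hKpos]
    nlinarith
  have hMKK : MK ≤ K := by
    have : (MK:ℝ) ≤ (K:ℝ) := by nlinarith
    exact_mod_cast this
  have htail : ∀ k, ENNReal.ofReal p ≤ μ {ω | LK ≤ X k ω} := by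
    intro k
    rw [hLK]
    exact tail_prob_ge μ (X k) (hXm k) F (hcdf k) hFcont p hp0 hp1
  set T : Ω → ℝ := fun ω => ∑ k, (if LK ≤ X k ω then (1:ℝ) else 0) with hT
  have hindmeas : ∀ k : Fin K, Measurable (fun ω => (if LK ≤ X k ω then (1:ℝ) else 0)) := by
    intro k
    exact Measurable.ite ((hXm k) measurableSet_Ici) measurable_const measurable_const
  have hTmeas : Measurable T :=
    Finset.measurable_sum Finset.univ (fun k _ => hindmeas k)
  have hcard : ∀ ω, (((Finset.univ.filter (fun k => LK ≤ X k ω)).card : ℝ)) = T ω := by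
    intro ω
    rw [Finset.card_filter]
    push_cast
    rfl
  have hgood_eq : {ω | LK ≤ orderStat (fun k => X k ω) (K - MK + 1)}
      = {ω | (MK:ℝ) ≤ T ω} := by
    ext ω
    simp only [Set.mem_setOf_eq]
    rw [orderStat_ge_iff (fun k => X k ω) MK h1M hMKK LK]
    rw [← hcard ω]
    exact_mod_cast Iff.rfl
  have hgoodmeas : MeasurableSet {ω | LK ≤ orderStat (fun k => X k ω) (K - MK + 1)} := by
    rw [hgood_eq]
    exact measurableSet_le measurable_const hTmeas
  refine ⟨hgoodmeas, ?_⟩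
  set S : ℕ → Finset (Fin K) := fun r => (Finset.univ : Finset (Fin K)).filter
    (fun k : Fin K => (k : ℕ) % (m+1) = r) with hS
  set c : ℝ := (MK : ℝ) / ((m:ℝ)+1) with hc
  set Zr : ℕ → Ω → ℝ := fun r ω => ∑ k ∈ S r, (if LK ≤ X k ω then (1:ℝ) else 0) with hZr
  have hsubset : {ω | LK ≤ orderStat (fun k => X k ω) (K - MK + 1)}ᶜ ⊆
      ⋃ r ∈ Finset.range (m+1), {ω | Zr r ω ≤ c} := by
    rw [hgood_eq]
    intro ω hω
    simp only [Set.mem_compl_iff, Set.mem_setOf_eq, not_le] at hω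
    by_contra hcon
    simp only [Set.mem_iUnion, Set.mem_setOf_eq, not_exists, not_le, Finset.mem_range] at hcon
    have hfib : ∑ r ∈ Finset.range (m+1), Zr r ω = T ω := by
      rw [hT, hZr]
      exact Finset.sum_fiberwise_of_maps_to (fun k _ => Finset.mem_range.mpr
        (Nat.mod_lt _ (by omega))) _
    have hgt : (MK : ℝ) < ∑ r ∈ Finset.range (m+1), Zr r ω := by
      have hlt : ∀ r ∈ Finset.range (m+1), c < Zr r ω := by
        intro r hr
        exact hcon r (Finset.mem_range.mp hr)
      have hsum := Finset.sum_lt_sum_of_nonempty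
        (by simp : (Finset.range (m+1)).Nonempty) hlt
      simp only [Finset.sum_const, Finset.card_range, nsmul_eq_mul] at hsum
      have hceq : ((m:ℝ)+1) * c = MK := by
        rw [hc]; field_simp
      calc (MK:ℝ) = ((m:ℝ)+1) * c := hceq.symm
        _ = ((m+1 : ℕ):ℝ) * c := by push_cast; ring
        _ < ∑ r ∈ Finset.range (m+1), Zr r ω := hsum
    linarith [hfib ▸ hgt, hω]
  have hclass : ∀ r ∈ Finset.range (m+1),
      μ {ω | Zr r ω ≤ c} ≤ ENNReal.ofReal (((K:ℝ) ^ (4*(1+ε)))⁻¹) := by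
    intro r hr
    have hrm : r ≤ m := by
      have := Finset.mem_range.mp hr; omega
    have hind := hdep (S r) (class_pairwise K m r)
    have hch := class_chernoff μ X hXm LK (S r) hind p htail c
    rw [← ENNReal.ofReal_toReal (measure_ne_top μ {ω | Zr r ω ≤ c})]
    apply ENNReal.ofReal_le_ofReal
    refine hch.trans ?_
    have hrpow : ((K:ℝ) ^ (4*(1+ε)))⁻¹ = Real.exp (-(Real.log K * (4*(1+ε)))) := by
      rw [Real.rpow_def_of_pos hKpos, ← Real.exp_neg]
    rw [hrpow]
    apply Real.exp_le_exp.mpr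
    -- numeric inequality
    have hnat : K ≤ (m+1) * (K/(m+1)) + m := by
      have h := Nat.div_add_mod K (m+1)
      have h2 := Nat.mod_lt K (show 0 < m+1 by omega)
      omega
    have hfl : (K:ℝ) ≤ ((m:ℝ)+1) * ((K/(m+1):ℕ):ℝ) + m := by exact_mod_cast hnat
    have hcard' : ((K/(m+1):ℕ):ℝ) ≤ (((S r).card):ℝ) := by
      exact_mod_cast card_class K m r hrm
    have hn : (K:ℝ) - ((m:ℝ)+1) + 1 ≤ ((m:ℝ)+1) * (((S r).card):ℝ) := by nlinarith
    have hexp22 : Real.exp (-2) * Real.exp 2 = 1 := by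
      rw [← Real.exp_add]; norm_num
    have hpK : p * K = Real.exp 2 * MK := by
      rw [hp]; field_simp
    have hqB : ((1 - Real.exp (-2)) * p) * K = (Real.exp 2 - 1) * MK := by
      linear_combination (1 - Real.exp (-2)) * hpK - (MK:ℝ) * hexp22
    have hmm1 : (1:ℝ) ≤ (m:ℝ)+1 := by
      have : (0:ℝ) ≤ m := Nat.cast_nonneg m
      linarith
    have hB100 : 100*((m:ℝ)+1) ≤ (K:ℝ) := by exact_mod_cast hK100
    have hlam : 0 ≤ Real.log K := Real.log_nonneg (by exact_mod_cast hK1)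
    have hcmm : c * ((m:ℝ)+1) = (MK:ℝ) := by
      rw [hc]; field_simp
    exact exponent_bound ε (MK:ℝ) (K:ℝ) ((m:ℝ)+1) (((S r).card):ℝ)
      ((1 - Real.exp (-2)) * p) (Real.log K) (Real.exp 2)
      hε hMK1 hmm1 hB100 hlam hM3 hn (by linarith) hqB c hcmm
  calc μ {ω | LK ≤ orderStat (fun k => X k ω) (K - MK + 1)}ᶜ
      ≤ μ (⋃ r ∈ Finset.range (m+1), {ω | Zr r ω ≤ c}) := measure_mono hsubset
    _ ≤ ∑ r ∈ Finset.range (m+1), μ {ω | Zr r ω ≤ c} := measure_biUnion_finset_le _ _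
    _ ≤ ∑ _r ∈ Finset.range (m+1), ENNReal.ofReal (((K:ℝ) ^ (4*(1+ε)))⁻¹) :=
        Finset.sum_le_sum hclass
    _ = ((m+1 : ℕ) : ℝ≥0∞) * ENNReal.ofReal (((K:ℝ) ^ (4*(1+ε)))⁻¹) := by
        rw [Finset.sum_const, Finset.card_range]
        simp [nsmul_eq_mul]
    _ ≤ ENNReal.ofReal (2 * ((m:ℝ)+1) * ((K:ℝ) ^ (4*(1+ε)))⁻¹) := by
        rw [show (2 * ((m:ℝ)+1) * ((K:ℝ) ^ (4*(1+ε)))⁻¹)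
            = (2*((m:ℝ)+1)) * ((K:ℝ) ^ (4*(1+ε)))⁻¹ by ring]
        rw [ENNReal.ofReal_mul (by positivity)]
        apply mul_le_mul_left
        have h1 : ((m+1 : ℕ) : ℝ≥0∞) = ENNReal.ofReal (((m+1:ℕ):ℝ)) := by
          rw [ENNReal.ofReal_natCast]
        rw [h1]
        apply ENNReal.ofReal_le_ofReal
        push_cast
        linarith [Nat.cast_nonneg (α := ℝ) m]

/-- let `F` be a continuous unbounded CDF, `M_K → ∞`, `M_K/K → 0`,
`M_K ≥ (m+1)(1+ε) ln K`, and `L_K = q̄_F(e² M_K / K)`. Then: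
(1) there is `K₀` such that for every `K > K₀` and any identically `F`-distributed,
`m`-dependent `X_1,…,X_K`, `P(X_{(K-M_K+1)} ≥ L_K) ≥ 1 - 2(m+1)/K^{4(1+ε)}`;
(2) for `N = K` such rows, `P(min_n X_{n,(K-M_K+1)} ≥ L_K) → 1`. -/
theorem stmt_18 (m : ℕ) (ε : ℝ) (hε : 0 < ε)
    (F : ℝ → ℝ) (hFcont : Continuous F) (hFunb : ∀ x, F x < 1)
    (M : ℕ → ℕ)
    (hM1 : Tendsto (fun K => (M K : ℝ)) atTop atTop)
    (hM2 : Tendsto (fun K => (M K : ℝ) / K) atTop (nhds 0))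
    (hM3 : ∀ K : ℕ, ((m : ℝ) + 1) * (1 + ε) * Real.log K ≤ M K)
    (L : ℕ → ℝ) (hL : ∀ K : ℕ, L K = tailQuantile F (Real.exp 2 * M K / K)) :
    (∃ K₀ : ℕ, ∀ K : ℕ, K₀ < K →
      ∀ (Ω : Type) (_ : MeasurableSpace Ω) (μ : Measure Ω), IsProbabilityMeasure μ →
      ∀ X : Fin K → Ω → ℝ, (∀ k, Measurable (X k)) → (∀ k, cdfOf μ (X k) = F) →
        MDepFam μ m X →
        ENNReal.ofReal (1 - 2 * ((m : ℝ) + 1) / (K : ℝ) ^ (4 * (1 + ε))) ≤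
          μ {ω | L K ≤ orderStat (fun k => X k ω) (K - M K + 1)}) ∧
    (∀ (Ω : ℕ → Type) (inst : ∀ K, MeasurableSpace (Ω K)) (μ : ∀ K, Measure (Ω K)),
      (∀ K, IsProbabilityMeasure (μ K)) →
      ∀ X : ∀ K, Fin K → Fin K → Ω K → ℝ, (∀ K n k, Measurable (X K n k)) →
      (∀ K (n k : Fin K), cdfOf (μ K) (X K n k) = F) →
      (∀ K (n : Fin K), MDepFam (μ K) m (fun k => X K n k)) →
      Tendsto (fun K => μ K {ω | ∀ n : Fin K, L K ≤ orderStat (fun k => X K n k ω) (K - M K + 1)})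
        atTop (nhds 1)) := by
  classical
  -- eventual conditions on K
  have hev : ∀ᶠ K in atTop, (1 ≤ M K ∧ (M K : ℝ) ≤ (K:ℝ)/8 ∧ 100 * (m+1) ≤ K) := by
    have e1 : ∀ᶠ K in atTop, (1:ℝ) ≤ (M K : ℝ) := hM1.eventually_ge_atTop 1
    have e2 : ∀ᶠ K in atTop, (M K : ℝ) / K < 1/8 :=
      hM2.eventually (eventually_lt_nhds (by norm_num : (0:ℝ) < 1/8))
    have e3 : ∀ᶠ K in (atTop : Filter ℕ), 100 * (m+1) ≤ K := eventually_ge_atTop _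
    have e4 : ∀ᶠ K in (atTop : Filter ℕ), 1 ≤ K := eventually_ge_atTop _
    filter_upwards [e1, e2, e3, e4] with K h1 h2 h3 h4
    have hKpos : (0:ℝ) < K := by exact_mod_cast h4
    refine ⟨by exact_mod_cast h1, ?_, h3⟩
    rw [div_lt_iff₀ hKpos] at h2
    linarith
  obtain ⟨K₀, hK₀⟩ := eventually_atTop.mp hev
  constructor
  · refine ⟨K₀, fun K hK Ω inst μ hPμ X hXm hcdf hdep => ?_⟩
    obtain ⟨h1M, hM8, hK100⟩ := hK₀ K hK.le
    obtain ⟨hmeas, hcompl⟩ := key_bound m ε hε F hFcont K (M K) (L K) (hL K) (hM3 K)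
      h1M hM8 hK100 Ω μ X hXm hcdf hdep
    have hKpos : (0:ℝ) < K := by
      have : 1 ≤ K := by omega
      exact_mod_cast this
    have hgc : μ {ω | L K ≤ orderStat (fun k => X k ω) (K - M K + 1)}
        = 1 - μ {ω | L K ≤ orderStat (fun k => X k ω) (K - M K + 1)}ᶜ := by
      rw [prob_compl_eq_one_sub hmeas]
      rw [ENNReal.sub_sub_cancel ENNReal.one_ne_top (prob_le_one)]
    rw [hgc]
    have hdiv : 2 * ((m : ℝ) + 1) / (K : ℝ) ^ (4 * (1 + ε))
        = 2 * ((m:ℝ)+1) * ((K:ℝ) ^ (4*(1+ε)))⁻¹ := by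
      rw [div_eq_mul_inv]
    calc ENNReal.ofReal (1 - 2 * ((m : ℝ) + 1) / (K : ℝ) ^ (4 * (1 + ε)))
        = ENNReal.ofReal 1 - ENNReal.ofReal (2 * ((m : ℝ) + 1) / (K : ℝ) ^ (4 * (1 + ε))) := by
          rw [← ENNReal.ofReal_sub _ (by positivity)]
      _ ≤ 1 - μ {ω | L K ≤ orderStat (fun k => X k ω) (K - M K + 1)}ᶜ := by
          rw [ENNReal.ofReal_one]
          apply tsub_le_tsub_left
          rw [hdiv]
          exact hcompl
  · intro Ω inst μ hPμ X hXm hcdf hdep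
    set G : ∀ K : ℕ, Set (Ω K) := fun K =>
      {ω | ∀ n : Fin K, L K ≤ orderStat (fun k => X K n k ω) (K - M K + 1)} with hG
    set cQ : ℕ → ℝ := fun K => (K:ℝ) * (2 * ((m:ℝ)+1) * ((K:ℝ) ^ (4*(1+ε)))⁻¹) with hcQ
    have hlow : ∀ᶠ K in atTop, ENNReal.ofReal (1 - cQ K) ≤ μ K (G K) := by
      filter_upwards [eventually_gt_atTop K₀] with K hK
      obtain ⟨h1M, hM8, hK100⟩ := hK₀ K hK.le
      have hkb : ∀ n : Fin K,
          MeasurableSet {ω | L K ≤ orderStat (fun k => X K n k ω) (K - M K + 1)} ∧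
          μ K {ω | L K ≤ orderStat (fun k => X K n k ω) (K - M K + 1)}ᶜ ≤
            ENNReal.ofReal (2 * ((m:ℝ)+1) * ((K:ℝ) ^ (4*(1+ε)))⁻¹) := fun n =>
        key_bound m ε hε F hFcont K (M K) (L K) (hL K) (hM3 K)
          h1M hM8 hK100 (Ω K) (μ K) (fun k => X K n k) (fun k => hXm K n k)
          (fun k => hcdf K n k) (hdep K n)
      have hGi : G K = ⋂ n : Fin K,
          {ω | L K ≤ orderStat (fun k => X K n k ω) (K - M K + 1)} := by
        ext ω; simp [hG, Set.mem_iInter]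
      have hGmeas : MeasurableSet (G K) := by
        rw [hGi]; exact MeasurableSet.iInter (fun n => (hkb n).1)
      have hcomp : μ K (G K)ᶜ ≤ ENNReal.ofReal (cQ K) := by
        have hsub : (G K)ᶜ ⊆ ⋃ n : Fin K,
            {ω | L K ≤ orderStat (fun k => X K n k ω) (K - M K + 1)}ᶜ := by
          rw [hGi, Set.compl_iInter]
        refine (measure_mono hsub).trans ?_
        refine (measure_iUnion_le _).trans ?_
        calc ∑' n : Fin K, μ K {ω | L K ≤ orderStat (fun k => X K n k ω) (K - M K + 1)}ᶜ
            ≤ ∑' _n : Fin K, ENNReal.ofReal (2 * ((m:ℝ)+1) * ((K:ℝ) ^ (4*(1+ε)))⁻¹) :=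
              ENNReal.tsum_le_tsum (fun n => (hkb n).2)
          _ = (K : ℝ≥0∞) * ENNReal.ofReal (2 * ((m:ℝ)+1) * ((K:ℝ) ^ (4*(1+ε)))⁻¹) := by
              rw [tsum_fintype]
              simp [Finset.card_univ, nsmul_eq_mul]
          _ = ENNReal.ofReal (cQ K) := by
              rw [hcQ]
              rw [ENNReal.ofReal_mul (by positivity : (0:ℝ) ≤ (K:ℝ))]
              rw [ENNReal.ofReal_natCast]
      calc ENNReal.ofReal (1 - cQ K)
          = ENNReal.ofReal 1 - ENNReal.ofReal (cQ K) := by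
            rw [← ENNReal.ofReal_sub _ (by positivity)]
        _ ≤ 1 - μ K (G K)ᶜ := by
            rw [ENNReal.ofReal_one]
            exact tsub_le_tsub_left hcomp 1
        _ = μ K (G K) := by
            rw [prob_compl_eq_one_sub hGmeas]
            rw [ENNReal.sub_sub_cancel ENNReal.one_ne_top (prob_le_one)]
    have hcQ0 : Tendsto cQ atTop (nhds 0) := by
      have h1 : Tendsto (fun x : ℝ => x ^ (-(3 + 4*ε))) atTop (nhds 0) :=
        tendsto_rpow_neg_atTop (by linarith)
      have h2 : Tendsto (fun K : ℕ => ((K:ℝ)) ^ (-(3 + 4*ε))) atTop (nhds 0) :=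
        h1.comp tendsto_natCast_atTop_atTop
      have h3 : Tendsto (fun K : ℕ => 2 * ((m:ℝ)+1) * ((K:ℝ)) ^ (-(3 + 4*ε))) atTop (nhds 0) := by
        have := h2.const_mul (2 * ((m:ℝ)+1))
        simpa using this
      apply h3.congr'
      filter_upwards [eventually_ge_atTop 1] with K hK
      have hKpos : (0:ℝ) < K := by exact_mod_cast hK
      rw [hcQ]
      have hrw : (K:ℝ) * ((K:ℝ) ^ (4*(1+ε)))⁻¹ = (K:ℝ) ^ (-(3 + 4*ε)) := by
        rw [show (K:ℝ) * ((K:ℝ) ^ (4*(1+ε)))⁻¹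
            = (K:ℝ) ^ (1:ℝ) * (K:ℝ) ^ (-(4*(1+ε))) by
          rw [Real.rpow_one, Real.rpow_neg hKpos.le]]
        rw [← Real.rpow_add hKpos]
        congr 1
        ring
      show 2 * ((m:ℝ)+1) * (K:ℝ) ^ (-(3 + 4*ε)) = (K:ℝ) * (2 * ((m:ℝ)+1) * ((K:ℝ) ^ (4*(1+ε)))⁻¹)
      rw [← hrw]
      ring
    have hone : Tendsto (fun K => ENNReal.ofReal (1 - cQ K)) atTop (nhds 1) := by
      have : Tendsto (fun K => (1 : ℝ) - cQ K) atTop (nhds 1) := by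
        have := hcQ0.const_sub 1
        simpa using this
      have h2 := (ENNReal.continuous_ofReal.tendsto 1).comp this
      rw [ENNReal.ofReal_one] at h2
      exact h2
    apply tendsto_of_tendsto_of_tendsto_of_le_of_le' hone tendsto_const_nhds hlow
    filter_upwards with K
    exact prob_le_one
end
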